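/- Let D : ℝ^{d×N} → ℝ^{d×N} be a C¹ mapping whose derivative tensor A is symmetric and which is uniformly h-monotone, i.e. there is a positive nonincreasing continuous function h : [0,∞) → (0,∞) with h(|T|)|B|² ≤ (B,B)_{A(T)} for all T, B. Then the potential F(T) := ∫₀¹ D(tT)·T dt is a strictly convex function on ℝ^{d×N}. -/

import Mathlib

open MeasureTheory Filter Topology Set

noncomputable section

/-- The space of real `d × N` matrices with the Frobenius (Euclidean) inner product. -/
abbrev Mat (d N : ℕ) := EuclideanSpace ℝ (Fin d × Fin N)

/-- The potential `F(T) := ∫₀¹ D(tT)·T dt` of a mapping `D : ℝ^{d×N} → ℝ^{d×N}`. -/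
noncomputable def pot (d N : ℕ) (D : Mat d N → Mat d N) (T : Mat d N) : ℝ :=
  ∫ t in (0 : ℝ)..1, (inner ℝ (D (t • T)) T : ℝ)

section Aux

variable {d N : ℕ} {D : Mat d N → Mat d N}

/-- Derivative of the composition `s ↦ D (t • (T + s • B))`. -/
lemma hasDerivAt_comp (hD : ContDiff ℝ 1 D) (T B : Mat d N) (t s : ℝ) :
    HasDerivAt (fun s : ℝ => D (t • (T + s • B)))
      (fderiv ℝ D (t • (T + s • B)) (t • B)) s := by
  have h1 : HasDerivAt (fun s : ℝ => T + s • B) B s := by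
    simpa using ((hasDerivAt_id s).smul_const B).const_add T
  have h2 : HasDerivAt (fun s : ℝ => t • (T + s • B)) (t • B) s := h1.const_smul t
  exact ((hD.differentiable one_ne_zero (t • (T + s • B))).hasFDerivAt).comp_hasDerivAt s h2

/-- The key derivative formula: `s ↦ pot (T + s • B)` has derivative `⟪D(T+s•B), B⟫`. -/
lemma key (hD : ContDiff ℝ 1 D)
    (hsymm : ∀ T B C : Mat d N,
      (inner ℝ (fderiv ℝ D T B) C : ℝ) = (inner ℝ (fderiv ℝ D T C) B : ℝ))
    (T B : Mat d N) (s₀ : ℝ) :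
    HasDerivAt (fun s => pot d N D (T + s • B))
      (inner ℝ (D (T + s₀ • B)) B : ℝ) s₀ := by
  set X : ℝ → Mat d N := fun s => T + s • B with hX
  have hXcont : Continuous X := by fun_prop
  have hDc : Continuous D := hD.continuous
  have hAc : Continuous (fun x => fderiv ℝ D x) := hD.continuous_fderiv one_ne_zero
  -- the integrand and its s-derivative
  set F : ℝ → ℝ → ℝ := fun s t => (inner ℝ (D (t • X s)) (X s) : ℝ) with hFdef
  set F' : ℝ → ℝ → ℝ := fun s t =>
    (inner ℝ (D (t • X s)) B : ℝ) + (inner ℝ (fderiv ℝ D (t • X s) (t • B)) (X s) : ℝ)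
    with hF'def
  have hderiv : ∀ t s : ℝ, HasDerivAt (fun s => F s t) (F' s t) s := by
    intro t s
    have h1 : HasDerivAt (fun s : ℝ => D (t • X s))
        (fderiv ℝ D (t • X s) (t • B)) s := hasDerivAt_comp hD T B t s
    have h2 : HasDerivAt X B s := by
      simpa [hX] using ((hasDerivAt_id s).smul_const B).const_add T
    exact h1.inner ℝ h2
  -- a uniform bound on `F'` for `s` near `s₀`, `t ∈ [0,1]`
  obtain ⟨R, hR0, hR⟩ : ∃ R, 0 ≤ R ∧ ∀ s ∈ Metric.ball s₀ 1, ‖X s‖ ≤ R := by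
    refine ⟨‖T‖ + (|s₀| + 1) * ‖B‖, by positivity, fun s hs => ?_⟩
    have : |s| ≤ |s₀| + 1 := by
      have := abs_sub_abs_le_abs_sub s s₀
      simp only [Metric.mem_ball, Real.dist_eq] at hs
      linarith
    calc ‖X s‖ ≤ ‖T‖ + ‖s • B‖ := norm_add_le _ _
      _ ≤ ‖T‖ + (|s₀| + 1) * ‖B‖ := by
          rw [norm_smul, Real.norm_eq_abs]
          gcongr
  obtain ⟨C₁, hC₁⟩ := (isCompact_closedBall (0 : Mat d N) R).exists_bound_of_continuousOn
    hDc.continuousOn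
  obtain ⟨C₂, hC₂⟩ := (isCompact_closedBall (0 : Mat d N) R).exists_bound_of_continuousOn
    hAc.continuousOn
  have hmem : ∀ t : ℝ, t ∈ Set.uIoc (0:ℝ) 1 → ∀ s ∈ Metric.ball s₀ 1,
      t • X s ∈ Metric.closedBall (0 : Mat d N) R := by
    intro t ht s hs
    rw [Set.uIoc_of_le (by norm_num : (0:ℝ) ≤ 1)] at ht
    rw [Metric.mem_closedBall, dist_zero_right, norm_smul, Real.norm_eq_abs,
      abs_of_pos ht.1]
    calc t * ‖X s‖ ≤ 1 * R := by
          have := hR s hs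
          have := norm_nonneg (X s)
          nlinarith [ht.2]
      _ = R := one_mul R
  set K : ℝ := |C₁| * ‖B‖ + |C₂| * ‖B‖ * R with hK
  have hbound : ∀ t : ℝ, t ∈ Set.uIoc (0:ℝ) 1 → ∀ s ∈ Metric.ball s₀ 1, ‖F' s t‖ ≤ K := by
    intro t ht s hs
    have hmemt := hmem t ht s hs
    have ht1 : |t| ≤ 1 := by
      rw [Set.uIoc_of_le (by norm_num : (0:ℝ) ≤ 1)] at ht
      rw [abs_of_pos ht.1]; exact ht.2
    have e1 : |(inner ℝ (D (t • X s)) B : ℝ)| ≤ |C₁| * ‖B‖ := by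
      refine (abs_real_inner_le_norm _ _).trans ?_
      gcongr
      exact (hC₁ _ hmemt).trans (le_abs_self _)
    have e2 : |(inner ℝ (fderiv ℝ D (t • X s) (t • B)) (X s) : ℝ)| ≤ |C₂| * ‖B‖ * R := by
      refine (abs_real_inner_le_norm _ _).trans ?_
      have hop : ‖fderiv ℝ D (t • X s) (t • B)‖ ≤ |C₂| * ‖B‖ := by
        calc ‖fderiv ℝ D (t • X s) (t • B)‖
            ≤ ‖fderiv ℝ D (t • X s)‖ * ‖t • B‖ := ContinuousLinearMap.le_opNorm _ _
          _ ≤ |C₂| * ‖B‖ := by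
              rw [norm_smul, Real.norm_eq_abs]
              have h1 := (hC₂ _ hmemt).trans (le_abs_self C₂)
              calc ‖fderiv ℝ D (t • X s)‖ * (|t| * ‖B‖) ≤ |C₂| * (1 * ‖B‖) := by
                    gcongr
                _ = |C₂| * ‖B‖ := by ring
      calc ‖fderiv ℝ D (t • X s) (t • B)‖ * ‖X s‖ ≤ (|C₂| * ‖B‖) * R := by
            have := hR s hs
            have := norm_nonneg (X s)
            have : (0:ℝ) ≤ |C₂| * ‖B‖ := by positivity
            nlinarith [hR s hs, norm_nonneg (fderiv ℝ D (t • X s) (t • B)), hop,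
              norm_nonneg (X s)]
        _ = |C₂| * ‖B‖ * R := by ring
    calc ‖F' s t‖ = |F' s t| := rfl
      _ ≤ |(inner ℝ (D (t • X s)) B : ℝ)|
            + |(inner ℝ (fderiv ℝ D (t • X s) (t • B)) (X s) : ℝ)| := abs_add_le _ _
      _ ≤ K := by rw [hK]; gcongr
  -- continuity in t
  have hFcont : ∀ s : ℝ, Continuous (fun t => F s t) := by
    intro s
    apply Continuous.inner
    · exact hDc.comp (by fun_prop)
    · exact continuous_const
  have hF'cont : Continuous (fun t => F' s₀ t) := by
    apply Continuous.add
    · exact Continuous.inner (hDc.comp (by fun_prop)) continuous_const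
    · exact Continuous.inner
        ((hAc.comp (by fun_prop)).clm_apply (by fun_prop)) continuous_const
  -- differentiation under the integral sign
  have main := intervalIntegral.hasDerivAt_integral_of_dominated_loc_of_deriv_le
    (F := F) (F' := F') (x₀ := s₀) (a := (0:ℝ)) (b := 1) (μ := volume)
    (bound := fun _ => K) (Metric.ball_mem_nhds s₀ one_pos)
    (Filter.Eventually.of_forall fun s => ((hFcont s).aestronglyMeasurable).restrict)
    ((hFcont s₀).intervalIntegrable 0 1)
    (hF'cont.aestronglyMeasurable.restrict)
    (Filter.Eventually.of_forall fun t ht s hs => hbound t ht s hs)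
    (intervalIntegrable_const)
    (Filter.Eventually.of_forall fun t _ s _ => hderiv t s)
  have hmain := main.2
  -- compute the integral of F' s₀ by FTC
  have hFTC : (∫ t in (0:ℝ)..1, F' s₀ t) = (inner ℝ (D (X s₀)) B : ℝ) := by
    set φ : ℝ → ℝ := fun t => t * (inner ℝ (D (t • X s₀)) B : ℝ) with hφ
    have hφd : ∀ t : ℝ, HasDerivAt φ (F' s₀ t) t := by
      intro t
      have h1 : HasDerivAt (fun t : ℝ => D (t • X s₀))
          (fderiv ℝ D (t • X s₀) (X s₀)) t := by
        have h2 : HasDerivAt (fun t : ℝ => t • X s₀) (X s₀) t := by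
          simpa using (hasDerivAt_id t).smul_const (X s₀)
        exact ((hD.differentiable one_ne_zero (t • X s₀)).hasFDerivAt).comp_hasDerivAt t h2
      have h3 : HasDerivAt (fun t : ℝ => (inner ℝ (D (t • X s₀)) B : ℝ))
          ((inner ℝ (fderiv ℝ D (t • X s₀) (X s₀)) B : ℝ)) t := by
        simpa using h1.inner ℝ (hasDerivAt_const t B)
      have h4 := (hasDerivAt_id' t).fun_mul h3
      have hs : (inner ℝ (fderiv ℝ D (t • X s₀) (t • B)) (X s₀) : ℝ)
          = t * (inner ℝ (fderiv ℝ D (t • X s₀) (X s₀)) B : ℝ) := by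
        rw [hsymm (t • X s₀) (t • B) (X s₀), real_inner_smul_right]
      have : F' s₀ t = 1 * (inner ℝ (D (t • X s₀)) B : ℝ)
          + t * (inner ℝ (fderiv ℝ D (t • X s₀) (X s₀)) B : ℝ) := by
        simp only [hF'def, hs]; ring
      rw [hφ, this]
      simpa [mul_comm] using h4
    have hint : IntervalIntegrable (fun t => F' s₀ t) volume 0 1 :=
      hF'cont.intervalIntegrable 0 1
    have := intervalIntegral.integral_eq_sub_of_hasDerivAt
      (fun t _ => hφd t) hint
    rw [this]
    simp [hφ]
  rw [hFTC] at hmain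
  exact hmain

end Aux

/-- If `D : ℝ^{d×N} → ℝ^{d×N}` is `C¹` with symmetric derivative tensor `A` and is
uniformly `h`-monotone (with `h` positive, nonincreasing and continuous on `[0,∞)`),
then the potential `F(T) := ∫₀¹ D(tT)·T dt` is strictly convex on `ℝ^{d×N}`. -/
theorem strictConvex_potential (d N : ℕ) (hd : 1 ≤ d) (hN : 1 ≤ N)
    (D : Mat d N → Mat d N) (hD : ContDiff ℝ 1 D)
    (hsymm : ∀ T B C : Mat d N,
      (inner ℝ (fderiv ℝ D T B) C : ℝ) = (inner ℝ (fderiv ℝ D T C) B : ℝ))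
    (h : ℝ → ℝ)
    (hpos : ∀ s : ℝ, 0 ≤ s → 0 < h s)
    (hanti : AntitoneOn h (Set.Ici 0))
    (hcont : ContinuousOn h (Set.Ici 0))
    (hmon : ∀ T B : Mat d N, h ‖T‖ * ‖B‖ ^ 2 ≤ (inner ℝ (fderiv ℝ D T B) B : ℝ)) :
    StrictConvexOn ℝ Set.univ (pot d N D) := by
  refine ⟨convex_univ, ?_⟩
  rintro x - y - hxy a b ha hb hab
  set B : Mat d N := y - x with hB
  have hBne : B ≠ 0 := sub_ne_zero.mpr (Ne.symm hxy)
  set g : ℝ → ℝ := fun s => pot d N D (x + s • B) with hg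
  have hgd : ∀ s : ℝ, HasDerivAt g ((inner ℝ (D (x + s • B)) B : ℝ)) s :=
    fun s => key hD hsymm x B s
  -- g is strictly convex on ℝ
  have hgc : StrictConvexOn ℝ Set.univ g := by
    apply StrictMono.strictConvexOn_univ_of_deriv
    · exact Differentiable.continuous (fun s => (hgd s).differentiableAt)
    · have hderiv_eq : deriv g = fun s => (inner ℝ (D (x + s • B)) B : ℝ) :=
        funext fun s => (hgd s).deriv
      rw [hderiv_eq]
      apply strictMono_of_deriv_pos
      intro s
      have hψ : HasDerivAt (fun s => (inner ℝ (D (x + s • B)) B : ℝ))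
          ((inner ℝ (fderiv ℝ D (x + s • B) B) B : ℝ)) s := by
        have h1 : HasDerivAt (fun s : ℝ => D (x + s • B))
            (fderiv ℝ D (x + s • B) B) s := by
          simpa using hasDerivAt_comp hD x B 1 s
        simpa using h1.inner ℝ (hasDerivAt_const s B)
      rw [hψ.deriv]
      have h1 := hmon (x + s • B) B
      have h2 : 0 < h ‖x + s • B‖ * ‖B‖ ^ 2 := by
        have := hpos ‖x + s • B‖ (norm_nonneg _)
        have : (0:ℝ) < ‖B‖ := norm_pos_iff.mpr hBne
        positivity
      linarith
  -- transfer to pot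
  have e0 : g 0 = pot d N D x := by simp [hg]
  have e1 : g 1 = pot d N D y := by simp [hg, hB]
  have eb : g b = pot d N D (a • x + b • y) := by
    have : a • x + b • y = x + b • B := by
      rw [hB]
      have haeq : a = 1 - b := by linarith
      rw [haeq]
      module
    rw [hg, this]
  have := hgc.2 (Set.mem_univ (0:ℝ)) (Set.mem_univ (1:ℝ)) (by norm_num) ha hb hab
  simp only [smul_eq_mul, mul_zero, mul_one, zero_add] at this
  rw [e0, e1, eb] at this
  exact this
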